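/- Correctness of the LINEAR INEQUALITY reduction rule: given a linear inequality Σ_{i≤p} a_i x_i - Σ_{i>p} a_i x_i ≤ b over integer variables with positive integer coefficients and integer interval domains [l_i..h_i], every integer solution in the original box satisfies, for each positively occurring variable j, x_j ≤ ⌊α_j⌋ where α_j = (b - Σ_{i≤p, i≠j} a_i l_i + Σ_{i>p} a_i h_i)/a_j, and for each negatively occurring variable j, x_j ≥ ⌈β_j⌉ where β_j = (-b + Σ_{i≤p} a_i l_i - Σ_{i>p, i≠j} a_i h_i)/a_j. -/
import Mathlib


open Finset

theorem linear_inequality_reduction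
    (n p : ℕ) (a l h : Fin n → ℤ) (b : ℤ)
    (ha : ∀ i, 0 < a i)
    (pos neg : Finset (Fin n))
    (hpos : pos = Finset.univ.filter (fun i : Fin n => (i : ℕ) < p))
    (hneg : neg = Finset.univ.filter (fun i : Fin n => ¬ (i : ℕ) < p))
    (d : Fin n → ℤ)
    (hdom : ∀ i, l i ≤ d i ∧ d i ≤ h i)
    (hineq : ∑ i ∈ pos, a i * d i - ∑ i ∈ neg, a i * d i ≤ b) :
    (∀ j ∈ pos,
      d j ≤ ⌊(((b - ∑ i ∈ pos.erase j, a i * l i + ∑ i ∈ neg, a i * h i : ℤ) : ℚ)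
              / ((a j : ℤ) : ℚ))⌋) ∧
    (∀ j ∈ neg,
      ⌈(((-b + ∑ i ∈ pos, a i * l i - ∑ i ∈ neg.erase j, a i * h i : ℤ) : ℚ)
              / ((a j : ℤ) : ℚ))⌉ ≤ d j) := by
  constructor
  · intro j hj
    have key : a j * d j ≤ b - ∑ i ∈ pos.erase j, a i * l i + ∑ i ∈ neg, a i * h i := by
      have h1 : ∑ i ∈ pos, a i * d i = a j * d j + ∑ i ∈ pos.erase j, a i * d i :=
        (Finset.add_sum_erase _ _ hj).symm
      have h2 : ∑ i ∈ pos.erase j, a i * l i ≤ ∑ i ∈ pos.erase j, a i * d i :=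
        Finset.sum_le_sum fun i _ =>
          mul_le_mul_of_nonneg_left (hdom i).1 (ha i).le
      have h3 : ∑ i ∈ neg, a i * d i ≤ ∑ i ∈ neg, a i * h i :=
        Finset.sum_le_sum fun i _ =>
          mul_le_mul_of_nonneg_left (hdom i).2 (ha i).le
      linarith
    rw [Int.le_floor]
    rw [le_div_iff₀ (by exact_mod_cast ha j)]
    have : ((d j : ℚ)) * ((a j : ℤ) : ℚ) = ((d j * a j : ℤ) : ℚ) := by push_cast; ring
    rw [this]
    exact_mod_cast (by linarith : d j * a j ≤ b - ∑ i ∈ pos.erase j, a i * l i + ∑ i ∈ neg, a i * h i)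
  · intro j hj
    have key : -b + ∑ i ∈ pos, a i * l i - ∑ i ∈ neg.erase j, a i * h i ≤ a j * d j := by
      have h1 : ∑ i ∈ neg, a i * d i = a j * d j + ∑ i ∈ neg.erase j, a i * d i :=
        (Finset.add_sum_erase _ _ hj).symm
      have h2 : ∑ i ∈ neg.erase j, a i * d i ≤ ∑ i ∈ neg.erase j, a i * h i :=
        Finset.sum_le_sum fun i _ =>
          mul_le_mul_of_nonneg_left (hdom i).2 (ha i).le
      have h3 : ∑ i ∈ pos, a i * l i ≤ ∑ i ∈ pos, a i * d i :=
        Finset.sum_le_sum fun i _ =>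
          mul_le_mul_of_nonneg_left (hdom i).1 (ha i).le
      linarith
    rw [Int.ceil_le]
    rw [div_le_iff₀ (by exact_mod_cast ha j)]
    have : ((d j : ℚ)) * ((a j : ℤ) : ℚ) = ((d j * a j : ℤ) : ℚ) := by push_cast; ring
    rw [this]
    exact_mod_cast (by linarith : -b + ∑ i ∈ pos, a i * l i - ∑ i ∈ neg.erase j, a i * h i ≤ d j * a j)
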